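/- Conservation of the canonical energy–momentum. Suppose the Lagrangian does not depend explicitly on the coordinates, i.e. L = L(q⁰, q¹, …, q^N), and suppose Φ satisfies the Euler–Lagrange equations E_B ≡ 0 on ℝⁿ. Define the canonical energy–momentum τ^λ_σ(x) := δ^λ_σ L(jetΦ(x)) − Σ_{B=1}^{f} Σ_{Z=0}^{N−1} (∂_σ ∂_{ν₁}⋯∂_{ν_Z} Φ_B)(x) · K^{Bλν₁…ν_Z}(x). Then ∂_λ τ^λ_σ(x) = 0 for every x ∈ ℝⁿ and every σ ∈ {0,…,n−1}. -/

import Mathlib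

open scoped BigOperators

/-- Index of a jet variable: derivative order `X ≤ N`, field index `B`,
and a multi-index of coordinate directions of length `X`. -/
abbrev JIdx (n f N : ℕ) : Type := Σ X : Fin (N + 1), Fin f × (Fin (X : ℕ) → Fin n)

/-- The (finite-dimensional) space of jet variables `q = (q^X_{B,λ₁…λ_X})`. -/
abbrev Jet (n f N : ℕ) : Type := JIdx n f N → ℝ

/-- Partial derivative in the `i`-th coordinate direction. -/
noncomputable def pd {n : ℕ} (i : Fin n) (F : (Fin n → ℝ) → ℝ) (x : Fin n → ℝ) : ℝ :=
  fderiv ℝ F x (Pi.single i 1)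

/-- Iterated partial derivative along a list of coordinate directions. -/
noncomputable def pds {n : ℕ} : List (Fin n) → ((Fin n → ℝ) → ℝ) → (Fin n → ℝ) → ℝ
  | [], F => F
  | i :: l, F => pd i (pds l F)

/-- The `N`-jet of the family of fields `Φ` at the point `x`:
the collection `(Φ_B(x), ∂Φ_B(x), …, ∂^N Φ_B(x))`. -/
noncomputable def jet {n f N : ℕ} (Φ : Fin f → (Fin n → ℝ) → ℝ) (x : Fin n → ℝ) :
    Jet n f N :=
  fun idx => pds (List.ofFn idx.2.2) (Φ idx.2.1) x

/-- `∂L/∂q_idx` evaluated along the jet of `Φ`. -/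
noncomputable def dLdq {n f N : ℕ} (L : (Fin n → ℝ) → Jet n f N → ℝ)
    (Φ : Fin f → (Fin n → ℝ) → ℝ) (idx : JIdx n f N) (x : Fin n → ℝ) : ℝ :=
  fderiv ℝ (L x) (jet Φ x) (Pi.single idx 1)

/-- The jet with the multi-index of the order-`X` variables permuted by `σ`. -/
def permJet {n f N : ℕ} (X : Fin (N + 1)) (σ : Equiv.Perm (Fin (X : ℕ)))
    (q : Jet n f N) : Jet n f N :=
  fun idx =>
    if h : idx.1 = X then
      q ⟨idx.1, idx.2.1, fun i =>
        idx.2.2 (Fin.cast (congrArg Fin.val h).symm (σ (Fin.cast (congrArg Fin.val h) i)))⟩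
    else q idx

/-- The Euler–Lagrange expression `E_B(x)`. -/
noncomputable def EulerLagrange {n f N : ℕ} (L : (Fin n → ℝ) → Jet n f N → ℝ)
    (Φ : Fin f → (Fin n → ℝ) → ℝ) (B : Fin f) (x : Fin n → ℝ) : ℝ :=
  ∑ X : Fin (N + 1), ∑ lam : Fin (X : ℕ) → Fin n,
    (-1 : ℝ) ^ (X : ℕ) * pds (List.ofFn lam) (dLdq L Φ ⟨X, B, lam⟩) x

/-- The coefficients `K^{Bλν₁…ν_Z}(x)` of the boundary/divergence term. -/
noncomputable def Kcur {n f N : ℕ} (L : (Fin n → ℝ) → Jet n f N → ℝ)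
    (Φ : Fin f → (Fin n → ℝ) → ℝ) (B : Fin f) (lam : Fin n) (Z : Fin N)
    (nu : Fin (Z : ℕ) → Fin n) (x : Fin n → ℝ) : ℝ :=
  ∑ Y : Fin (N - (Z : ℕ)), ∑ mu : Fin (Y : ℕ) → Fin n,
    (-1 : ℝ) ^ (Y : ℕ) *
      pds (List.ofFn mu)
        (dLdq L Φ
          ⟨⟨1 + (Y : ℕ) + (Z : ℕ), by have h1 := Y.isLt; have h2 := Z.isLt; omega⟩, B,
            Fin.append (Fin.append (fun _ : Fin 1 => lam) mu) nu⟩) x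


section Tools
variable {n : ℕ}

lemma contDiff_pd (i : Fin n) {F : (Fin n → ℝ) → ℝ} (hF : ContDiff ℝ (⊤:ℕ∞) F) :
    ContDiff ℝ (⊤:ℕ∞) (pd i F) := by
  have h1 : ContDiff ℝ (⊤:ℕ∞) (fderiv ℝ F) := hF.fderiv_right (m := (⊤:ℕ∞)) (by exact_mod_cast le_top)
  exact h1.clm_apply contDiff_const

lemma contDiff_pds {F : (Fin n → ℝ) → ℝ} (hF : ContDiff ℝ (⊤:ℕ∞) F) :
    ∀ l : List (Fin n), ContDiff ℝ (⊤:ℕ∞) (pds l F)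
  | [] => hF
  | i :: l => contDiff_pd i (contDiff_pds hF l)

lemma pd_comm {F : (Fin n → ℝ) → ℝ} (hF : ContDiff ℝ (⊤:ℕ∞) F) (i j : Fin n)
    (x : Fin n → ℝ) : pd i (pd j F) x = pd j (pd i F) x := by
  have hd : Differentiable ℝ (fderiv ℝ F) :=
    (hF.fderiv_right (m := (⊤:ℕ∞)) (by exact_mod_cast le_top)).differentiable (by simp)
  have key : ∀ (v w : Fin n → ℝ) (y : Fin n → ℝ),
      fderiv ℝ (fun z => fderiv ℝ F z v) y w = fderiv ℝ (fderiv ℝ F) y w v := by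
    intro v w y
    rw [fderiv_clm_apply (hd y) (differentiableAt_const v)]
    simp
  have hsymm : IsSymmSndFDerivAt ℝ F x := by
    refine (hF.contDiffAt).isSymmSndFDerivAt ?_
    norm_cast
    simp
    exact WithTop.coe_le_coe.mpr le_top
  show fderiv ℝ (fun z => fderiv ℝ F z (Pi.single j 1)) x (Pi.single i 1)
      = fderiv ℝ (fun z => fderiv ℝ F z (Pi.single i 1)) x (Pi.single j 1)
  rw [key, key]
  exact hsymm _ _

lemma pds_perm {F : (Fin n → ℝ) → ℝ} (hF : ContDiff ℝ (⊤:ℕ∞) F) :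
    ∀ {l₁ l₂ : List (Fin n)}, l₁.Perm l₂ → pds l₁ F = pds l₂ F := by
  intro l₁ l₂ h
  induction h with
  | nil => rfl
  | cons a h ih => show pd a _ = pd a _; rw [ih]
  | swap a b l =>
      funext x
      show pd _ (pd _ (pds l F)) x = pd _ (pd _ (pds l F)) x
      exact pd_comm (contDiff_pds hF l) _ _ x
  | trans h1 h2 ih1 ih2 => rw [ih1, ih2]

lemma pd_sub {F G : (Fin n → ℝ) → ℝ} (hF : Differentiable ℝ F)
    (hG : Differentiable ℝ G) (i : Fin n) (x : Fin n → ℝ) :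
    pd i (fun y => F y - G y) x = pd i F x - pd i G x := by
  simp only [pd]
  rw [fderiv_fun_sub (hF x) (hG x)]; rfl

lemma pd_mul {F G : (Fin n → ℝ) → ℝ} (hF : Differentiable ℝ F)
    (hG : Differentiable ℝ G) (i : Fin n) (x : Fin n → ℝ) :
    pd i (fun y => F y * G y) x = pd i F x * G x + F x * pd i G x := by
  simp only [pd]
  rw [fderiv_fun_mul (hF x) (hG x)]
  simp only [ContinuousLinearMap.add_apply, ContinuousLinearMap.smul_apply, smul_eq_mul]
  ring

lemma pd_sum {ι : Type*} (s : Finset ι) {F : ι → (Fin n → ℝ) → ℝ}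
    (hF : ∀ j, Differentiable ℝ (F j)) (i : Fin n) (x : Fin n → ℝ) :
    pd i (fun y => ∑ j ∈ s, F j y) x = ∑ j ∈ s, pd i (F j) x := by
  simp only [pd]
  rw [fderiv_fun_sum (fun j _ => (hF j) x)]
  simp

lemma pd_zero (i : Fin n) (x : Fin n → ℝ) : pd i (fun _ => (0:ℝ)) x = 0 := by
  simp [pd]

end Tools

section JetTools

variable {n f N : ℕ} {L0 : Jet n f N → ℝ} {Φ : Fin f → (Fin n → ℝ) → ℝ}

lemma contDiff_jet_comp (hΦ : ∀ B, ContDiff ℝ (⊤:ℕ∞) (Φ B)) (idx : JIdx n f N) :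
    ContDiff ℝ (⊤:ℕ∞) (fun x => jet (N := N) Φ x idx) :=
  contDiff_pds (hΦ _) _

lemma contDiff_jet (hΦ : ∀ B, ContDiff ℝ (⊤:ℕ∞) (Φ B)) :
    ContDiff ℝ (⊤:ℕ∞) (fun x => jet (N := N) Φ x) :=
  contDiff_pi.2 fun idx => contDiff_jet_comp hΦ idx

lemma contDiff_dLdq (hL : ContDiff ℝ (⊤:ℕ∞) L0) (hΦ : ∀ B, ContDiff ℝ (⊤:ℕ∞) (Φ B))
    (idx : JIdx n f N) : ContDiff ℝ (⊤:ℕ∞) (dLdq (fun _ => L0) Φ idx) := by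
  have h1 : ContDiff ℝ (⊤:ℕ∞) (fun q : Jet n f N => fderiv ℝ L0 q (Pi.single idx 1)) :=
    (hL.fderiv_right (m := (⊤:ℕ∞)) (by exact_mod_cast le_top)).clm_apply contDiff_const
  exact h1.comp (contDiff_jet hΦ)

lemma exists_comp_perm_of_ofFn_perm {α : Type*} [LinearOrder α] {a : ℕ} {κ κ' : Fin a → α}
    (h : (List.ofFn κ).Perm (List.ofFn κ')) : ∃ σ : Equiv.Perm (Fin a), κ ∘ σ = κ' := by
  have h1 : (List.ofFn (κ ∘ Tuple.sort κ)).Perm (List.ofFn (κ' ∘ Tuple.sort κ')) :=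
    ((Equiv.Perm.ofFn_comp_perm (Tuple.sort κ) κ).trans h).trans
      (Equiv.Perm.ofFn_comp_perm (Tuple.sort κ') κ').symm
  have h2 : κ ∘ Tuple.sort κ = κ' ∘ Tuple.sort κ' := by
    have := List.Perm.eq_of_sortedLE (Tuple.monotone_sort κ).sortedLE_ofFn
      (Tuple.monotone_sort κ').sortedLE_ofFn h1
    exact List.ofFn_injective this
  refine ⟨(Tuple.sort κ').symm.trans (Tuple.sort κ), ?_⟩
  funext i
  have := congrFun h2 ((Tuple.sort κ').symm i)
  simpa using this

lemma jet_comp_perm (hΦ : ∀ B, ContDiff ℝ (⊤:ℕ∞) (Φ B)) (x : Fin n → ℝ)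
    (X : Fin (N+1)) (B : Fin f) (κ : Fin (X:ℕ) → Fin n) (σ : Equiv.Perm (Fin (X:ℕ))) :
    jet (N := N) Φ x ⟨X, B, κ ∘ σ⟩ = jet Φ x ⟨X, B, κ⟩ := by
  show pds (List.ofFn (κ ∘ σ)) (Φ B) x = pds (List.ofFn κ) (Φ B) x
  rw [pds_perm (hΦ B) (Equiv.Perm.ofFn_comp_perm σ κ)]

/-- Index shuffling map underlying `permJet`. -/
def permIdx {n f N : ℕ} (X : Fin (N + 1)) (σ : Equiv.Perm (Fin (X : ℕ)))
    (idx : JIdx n f N) : JIdx n f N :=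
  if h : idx.1 = X then
    ⟨idx.1, idx.2.1, fun i =>
      idx.2.2 (Fin.cast (congrArg Fin.val h).symm (σ (Fin.cast (congrArg Fin.val h) i)))⟩
  else idx

lemma permJet_eq_comp (X : Fin (N + 1)) (σ : Equiv.Perm (Fin (X : ℕ))) (q : Jet n f N) :
    permJet X σ q = fun idx => q (permIdx X σ idx) := by
  funext idx
  unfold permJet permIdx
  split <;> rfl

lemma permIdx_mk (X : Fin (N + 1)) (σ : Equiv.Perm (Fin (X : ℕ))) (B : Fin f)
    (κ : Fin (X:ℕ) → Fin n) : permIdx (n := n) (f := f) X σ ⟨X, B, κ⟩ = ⟨X, B, κ ∘ σ⟩ := by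
  unfold permIdx
  rw [dif_pos rfl]
  rfl

lemma permIdx_comp_inv (X : Fin (N + 1)) (σ : Equiv.Perm (Fin (X : ℕ)))
    (idx : JIdx n f N) : permIdx (n := n) (f := f) X σ (permIdx X σ⁻¹ idx) = idx := by
  obtain ⟨X', B, κ⟩ := idx
  by_cases h : X' = X
  · subst h
    rw [permIdx_mk, permIdx_mk]
    have : (κ ∘ ⇑σ⁻¹) ∘ ⇑σ = κ := by
      funext i; simp
    rw [this]
  · unfold permIdx
    rw [dif_neg h, dif_neg h]

/-- `permJet` as a continuous linear map. -/
noncomputable def permCLM (X : Fin (N + 1)) (σ : Equiv.Perm (Fin (X : ℕ))) :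
    Jet n f N →L[ℝ] Jet n f N :=
  ContinuousLinearMap.pi fun idx => ContinuousLinearMap.proj (permIdx X σ idx)

lemma permCLM_apply (X : Fin (N + 1)) (σ : Equiv.Perm (Fin (X : ℕ))) (q : Jet n f N) :
    permCLM (n := n) (f := f) X σ q = permJet X σ q := by
  rw [permJet_eq_comp]; rfl

end JetTools

section DLTools

variable {n f N : ℕ} {L0 : Jet n f N → ℝ} {Φ : Fin f → (Fin n → ℝ) → ℝ}

lemma permIdx_injective (X : Fin (N + 1)) (σ : Equiv.Perm (Fin (X : ℕ))) :
    Function.Injective (permIdx (n := n) (f := f) X σ) := by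
  intro a b h
  have ha := permIdx_comp_inv (n := n) (f := f) X σ⁻¹ a
  have hb := permIdx_comp_inv (n := n) (f := f) X σ⁻¹ b
  rw [inv_inv] at ha hb
  rw [← ha, ← hb, h]

lemma permCLM_single (X : Fin (N + 1)) (σ : Equiv.Perm (Fin (X : ℕ))) (idx : JIdx n f N) :
    permCLM (n := n) (f := f) X σ (Pi.single (permIdx X σ idx) 1) = Pi.single idx 1 := by
  funext j
  simp only [permCLM, ContinuousLinearMap.pi_apply, ContinuousLinearMap.proj_apply]
  by_cases h : j = idx
  · subst h; simp
  · rw [Pi.single_apply, Pi.single_apply, if_neg (fun hc => h (permIdx_injective X σ hc)),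
      if_neg h]

/-- Invariance of `∂L/∂q` along the jet under permutations of the multi-index. -/
lemma dLdq_comp_perm (hL : ContDiff ℝ (⊤:ℕ∞) L0)
    (hLsymm : ∀ (q : Jet n f N) (X : Fin (N + 1)) (σ : Equiv.Perm (Fin (X : ℕ))),
      L0 (permJet X σ q) = L0 q)
    (hΦ : ∀ B, ContDiff ℝ (⊤:ℕ∞) (Φ B)) (x : Fin n → ℝ)
    (X : Fin (N+1)) (B : Fin f) (κ : Fin (X:ℕ) → Fin n) (σ : Equiv.Perm (Fin (X:ℕ))) :
    dLdq (fun _ => L0) Φ ⟨X, B, κ ∘ σ⟩ x = dLdq (fun _ => L0) Φ ⟨X, B, κ⟩ x := by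
  set P := permCLM (n := n) (f := f) X σ with hP
  set p := jet (N := N) Φ x with hp
  have hL0P : ∀ q, L0 (P q) = L0 q := by
    intro q; rw [permCLM_apply]; exact hLsymm q X σ
  have hPp : P p = p := by
    rw [permCLM_apply]
    rw [permJet_eq_comp]
    funext idx
    obtain ⟨X', B', κ'⟩ := idx
    by_cases h : X' = X
    · subst h
      rw [permIdx_mk]
      exact jet_comp_perm hΦ x X' B' κ' σ
    · unfold permIdx
      rw [dif_neg h]
  have hdiff : Differentiable ℝ L0 := hL.differentiable (by simp)
  have hcomp : fderiv ℝ (fun q => L0 (P q)) p = (fderiv ℝ L0 (P p)).comp P := by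
    have := fderiv_comp (𝕜 := ℝ) p (hdiff (P p)) P.differentiableAt
    rw [P.fderiv] at this
    exact this
  have hfun : (fun q => L0 (P q)) = L0 := funext hL0P
  rw [hfun, hPp] at hcomp
  have hidx : permIdx (n := n) (f := f) X σ ⟨X, B, κ⟩ = ⟨X, B, κ ∘ σ⟩ := permIdx_mk X σ B κ
  show fderiv ℝ L0 p (Pi.single (⟨X, (B, κ ∘ ⇑σ)⟩ : JIdx n f N) 1)
      = fderiv ℝ L0 p (Pi.single (⟨X, (B, κ)⟩ : JIdx n f N) 1)
  conv_lhs => rw [hcomp]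
  rw [ContinuousLinearMap.comp_apply, ← hidx, permCLM_single]

end DLTools

section ChainRule

variable {n f N : ℕ} {L0 : Jet n f N → ℝ} {Φ : Fin f → (Fin n → ℝ) → ℝ}

lemma dLdq_congr (hL : ContDiff ℝ (⊤:ℕ∞) L0)
    (hLsymm : ∀ (q : Jet n f N) (X : Fin (N + 1)) (σ : Equiv.Perm (Fin (X : ℕ))),
      L0 (permJet X σ q) = L0 q)
    (hΦ : ∀ B, ContDiff ℝ (⊤:ℕ∞) (Φ B)) {a b : ℕ} (ha : a < N+1) (hb : b < N+1)
    (B : Fin f) (κ : Fin a → Fin n) (κ' : Fin b → Fin n)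
    (h : (List.ofFn κ).Perm (List.ofFn κ')) (x : Fin n → ℝ) :
    dLdq (fun _ => L0) Φ ⟨⟨a, ha⟩, B, κ⟩ x = dLdq (fun _ => L0) Φ ⟨⟨b, hb⟩, B, κ'⟩ x := by
  have hab : a = b := by simpa using h.length_eq
  subst hab
  obtain ⟨σ, hσ⟩ := exists_comp_perm_of_ofFn_perm h
  rw [← hσ]
  exact (dLdq_comp_perm hL hLsymm hΦ x ⟨a, ha⟩ B κ σ).symm

lemma pd_L0_jet (hL : ContDiff ℝ (⊤:ℕ∞) L0) (hΦ : ∀ B, ContDiff ℝ (⊤:ℕ∞) (Φ B))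
    (σ : Fin n) (x : Fin n → ℝ) :
    pd σ (fun x' => L0 (jet (N := N) Φ x')) x
      = ∑ idx : JIdx n f N,
          pds (σ :: List.ofFn idx.2.2) (Φ idx.2.1) x * dLdq (fun _ => L0) Φ idx x := by
  have hdiffjet : DifferentiableAt ℝ (fun x' => jet (N := N) Φ x') x :=
    ((contDiff_jet hΦ).differentiable (by simp)) x
  have hdL0 : DifferentiableAt ℝ L0 (jet (N := N) Φ x) :=
    (hL.differentiable (by simp)) _
  have hcomp : pd σ (fun x' => L0 (jet (N := N) Φ x')) x
      = fderiv ℝ L0 (jet Φ x) (fderiv ℝ (fun x' => jet (N := N) Φ x') x (Pi.single σ 1)) := by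
    show fderiv ℝ (L0 ∘ fun x' => jet (N := N) Φ x') x (Pi.single σ 1) = _
    rw [fderiv_comp x hdL0 hdiffjet]
    rfl
  rw [hcomp]
  set w := fderiv ℝ (fun x' => jet (N := N) Φ x') x (Pi.single σ 1) with hw
  have hwc : ∀ idx : JIdx n f N, w idx = pds (σ :: List.ofFn idx.2.2) (Φ idx.2.1) x := by
    intro idx
    have hpi : fderiv ℝ (fun x' => jet (N := N) Φ x') x =
        ContinuousLinearMap.pi
          (fun idx => fderiv ℝ (fun x' => jet (N := N) Φ x' idx) x) := by
      exact fderiv_pi (fun idx =>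
        ((contDiff_jet_comp hΦ idx).differentiable (by simp)) x)
    rw [hw, hpi]
    show fderiv ℝ (fun x' => jet (N := N) Φ x' idx) x (Pi.single σ 1) = _
    rfl
  have hsum : w = ∑ idx : JIdx n f N, (w idx) • (Pi.single idx 1 : Jet n f N) := by
    funext j
    rw [Finset.sum_apply]
    simp only [Pi.smul_apply, Pi.single_apply, smul_eq_mul, mul_ite, mul_one, mul_zero]
    simp [Finset.sum_ite_eq]
  calc fderiv ℝ L0 (jet (N := N) Φ x) w
      = ∑ idx : JIdx n f N, w idx * fderiv ℝ L0 (jet (N := N) Φ x) (Pi.single idx 1) := by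
        conv_lhs => rw [hsum]
        rw [map_sum]
        congr 1
        funext idx
        rw [map_smul]
        rfl
    _ = _ := by
        refine Finset.sum_congr rfl (fun idx _ => ?_)
        rw [hwc]
        rfl

end ChainRule

section Mcur

variable {n f N : ℕ}

/-- The auxiliary quantity `M^{Z}_{ν₁…ν_Z}`. -/
noncomputable def Mcur (L0 : Jet n f N → ℝ) (Φ : Fin f → (Fin n → ℝ) → ℝ)
    (B : Fin f) (Z : ℕ) (hZ : Z ≤ N) (nu : Fin Z → Fin n) (x : Fin n → ℝ) : ℝ :=
  ∑ Y : Fin (N - Z + 1), ∑ mu : Fin (Y:ℕ) → Fin n,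
    (-1:ℝ)^(Y:ℕ) * pds (List.ofFn mu)
      (dLdq (fun _ => L0) Φ
        ⟨⟨(Y:ℕ) + Z, by have := Y.isLt; omega⟩, B, Fin.append mu nu⟩) x

variable {L0 : Jet n f N → ℝ} {Φ : Fin f → (Fin n → ℝ) → ℝ}

lemma sum_cons_equiv {m : ℕ} (g : (Fin (m+1) → Fin n) → ℝ) :
    ∑ mu' : Fin (m+1) → Fin n, g mu'
      = ∑ i : Fin n, ∑ mu : Fin m → Fin n, g (Fin.cons i mu) := by
  have h1 : ∑ p : Fin n × (Fin m → Fin n), g (Fin.cons p.1 p.2)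
      = ∑ i : Fin n, ∑ mu : Fin m → Fin n, g (Fin.cons i mu) := Fintype.sum_prod_type _
  rw [← h1]
  exact (Fintype.sum_equiv (Fin.consEquiv fun _ => Fin n) _ _ (fun p => rfl)).symm

lemma Mcur_zero (hL : ContDiff ℝ (⊤:ℕ∞) L0)
    (hLsymm : ∀ (q : Jet n f N) (X : Fin (N + 1)) (σ : Equiv.Perm (Fin (X : ℕ))),
      L0 (permJet X σ q) = L0 q)
    (hΦ : ∀ B, ContDiff ℝ (⊤:ℕ∞) (Φ B)) (B : Fin f) (nu : Fin 0 → Fin n) (x : Fin n → ℝ) :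
    Mcur L0 Φ B 0 (Nat.zero_le N) nu x = EulerLagrange (fun _ => L0) Φ B x := by
  unfold Mcur EulerLagrange
  refine Fintype.sum_congr _ _ (fun Y => ?_)
  refine Fintype.sum_congr _ _ (fun mu => ?_)
  congr 1
  refine congrFun (congrArg _ ?_) x
  have hfn : ∀ y, dLdq (fun _ => L0) Φ
      ⟨⟨(Y:ℕ) + 0, by have := Y.isLt; omega⟩, B, Fin.append mu nu⟩ y
      = dLdq (fun _ => L0) Φ ⟨Y, B, mu⟩ y := by
    intro y
    have hperm : (List.ofFn (Fin.append mu nu)).Perm (List.ofFn mu) := by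
      rw [List.ofFn_fin_append]
      simp
    exact dLdq_congr hL hLsymm hΦ _ Y.isLt B (Fin.append mu nu) mu hperm y
  exact funext hfn

lemma Mcur_top (hL : ContDiff ℝ (⊤:ℕ∞) L0)
    (hLsymm : ∀ (q : Jet n f N) (X : Fin (N + 1)) (σ : Equiv.Perm (Fin (X : ℕ))),
      L0 (permJet X σ q) = L0 q)
    (hΦ : ∀ B, ContDiff ℝ (⊤:ℕ∞) (Φ B)) (B : Fin f) (nu : Fin N → Fin n) (x : Fin n → ℝ) :
    Mcur L0 Φ B N le_rfl nu x
      = dLdq (fun _ => L0) Φ ⟨⟨N, by omega⟩, B, nu⟩ x := by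
  unfold Mcur
  rw [Fin.sum_univ_succ]
  have hempty : IsEmpty (Fin (N - N)) := ⟨fun i => absurd i.isLt (by omega)⟩
  rw [@Finset.univ_eq_empty _ _ hempty, Finset.sum_empty, add_zero]
  have hu : Unique (Fin ((0 : Fin (N - N + 1)) : ℕ) → Fin n) := by
    have h0 : ((0 : Fin (N - N + 1)) : ℕ) = 0 := rfl
    rw [h0]
    infer_instance
  rw [@Fintype.sum_unique _ _ _ _ hu]
  simp only [Fin.val_zero, pow_zero, one_mul]
  show pds [] (dLdq (fun _ => L0) Φ _) x = _
  unfold pds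
  refine dLdq_congr hL hLsymm hΦ _ _ B _ nu ?_ x
  rw [List.ofFn_fin_append]
  have : List.ofFn (@default (Fin 0 → Fin n) _) = [] := by simp
  simp

lemma Mcur_step (hL : ContDiff ℝ (⊤:ℕ∞) L0)
    (hLsymm : ∀ (q : Jet n f N) (X : Fin (N + 1)) (σ : Equiv.Perm (Fin (X : ℕ))),
      L0 (permJet X σ q) = L0 q)
    (hΦ : ∀ B, ContDiff ℝ (⊤:ℕ∞) (Φ B)) (B : Fin f) (Z : Fin N) (i : Fin n)
    (nu : Fin (Z:ℕ) → Fin n) (x : Fin n → ℝ) :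
    Mcur L0 Φ B ((Z:ℕ)+1) (by have := Z.isLt; omega) (Fin.cons i nu) x
      = Kcur (fun _ => L0) Φ B i Z nu x := by
  unfold Mcur Kcur
  have hcast : N - (Z:ℕ) = N - ((Z:ℕ)+1) + 1 := by have := Z.isLt; omega
  refine (Fintype.sum_equiv (finCongr hcast) _ _ (fun Y => ?_)).symm
  refine Fintype.sum_congr _ _ (fun mu => ?_)
  show (-1:ℝ) ^ (Y:ℕ) * pds (List.ofFn mu)
      (dLdq (fun _ => L0) Φ
        ⟨⟨1 + (Y:ℕ) + (Z:ℕ), by have := Y.isLt; have := Z.isLt; omega⟩, B,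
          Fin.append (Fin.append (fun _ : Fin 1 => i) mu) nu⟩) x
    = (-1:ℝ) ^ (Y:ℕ) * pds (List.ofFn mu)
      (dLdq (fun _ => L0) Φ
        ⟨⟨(Y:ℕ) + ((Z:ℕ)+1), by have := Y.isLt; have := Z.isLt; omega⟩, B,
          Fin.append mu (Fin.cons i nu)⟩) x
  congr 1
  refine congrFun (congrArg _ (funext fun y => ?_)) x
  refine (dLdq_congr hL hLsymm hΦ _ _ B _ _ ?_ y).symm
  rw [List.ofFn_fin_append, List.ofFn_fin_append, List.ofFn_fin_append]
  have h1 : List.ofFn (fun _ : Fin 1 => i) = [i] := by simp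
  have h2 : List.ofFn (Fin.cons i nu : Fin ((Z:ℕ)+1) → Fin n) = i :: List.ofFn nu := by
    simp [List.ofFn_succ]
  rw [h1, h2]
  simpa using List.perm_middle.symm

end Mcur

section KDiv

variable {n f N : ℕ} {L0 : Jet n f N → ℝ} {Φ : Fin f → (Fin n → ℝ) → ℝ}

lemma pd_const_mul {F : (Fin n → ℝ) → ℝ} (hF : Differentiable ℝ F) (c : ℝ)
    (i : Fin n) (x : Fin n → ℝ) :
    pd i (fun y => c * F y) x = c * pd i F x := by
  simp only [pd]
  rw [fderiv_const_mul (hF x) c]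
  rfl

lemma ofFn_cons {m : ℕ} (i : Fin n) (mu : Fin m → Fin n) :
    List.ofFn (Fin.cons i mu : Fin (m+1) → Fin n) = i :: List.ofFn mu := by
  simp [List.ofFn_succ]

lemma ofFn_one (i : Fin n) : List.ofFn (fun _ : Fin 1 => i) = [i] := by simp

set_option maxHeartbeats 2000000 in
lemma Kcur_div (hL : ContDiff ℝ (⊤:ℕ∞) L0)
    (hLsymm : ∀ (q : Jet n f N) (X : Fin (N + 1)) (σ : Equiv.Perm (Fin (X : ℕ))),
      L0 (permJet X σ q) = L0 q)
    (hΦ : ∀ B, ContDiff ℝ (⊤:ℕ∞) (Φ B)) (B : Fin f) (Z : Fin N)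
    (nu : Fin (Z:ℕ) → Fin n) (x : Fin n → ℝ) :
    ∑ i : Fin n, pd i (Kcur (fun _ => L0) Φ B i Z nu) x
      = dLdq (fun _ => L0) Φ ⟨⟨(Z:ℕ), by have := Z.isLt; omega⟩, B, nu⟩ x
        - Mcur L0 Φ B (Z:ℕ) (by have := Z.isLt; omega) nu x := by
  have hZN : (Z:ℕ) < N := Z.isLt
  -- the common "successor" sum
  set S : ℝ := ∑ Y : Fin (N - (Z:ℕ)), ∑ mu' : Fin ((Y:ℕ)+1) → Fin n,
    (-1:ℝ)^((Y:ℕ)+1) * pds (List.ofFn mu')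
      (dLdq (fun _ => L0) Φ
        ⟨⟨(Y:ℕ)+1+(Z:ℕ), by have := Y.isLt; omega⟩, B, Fin.append mu' nu⟩) x with hS
  have hdiffbase : ∀ (idx : JIdx n f N) (l : List (Fin n)),
      Differentiable ℝ (pds l (dLdq (fun _ => L0) Φ idx)) := fun idx l =>
    (contDiff_pds (contDiff_dLdq hL hΦ idx) l).differentiable (by simp)
  -- step 1 : expand the divergence of K
  have hKc : ∀ i : Fin n, pd i (Kcur (fun _ => L0) Φ B i Z nu) x
      = ∑ Y : Fin (N - (Z:ℕ)), ∑ mu : Fin (Y:ℕ) → Fin n,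
          (-1:ℝ)^(Y:ℕ) * pds (i :: List.ofFn mu)
            (dLdq (fun _ => L0) Φ
              ⟨⟨1+(Y:ℕ)+(Z:ℕ), by have := Y.isLt; omega⟩, B,
                Fin.append (Fin.append (fun _ : Fin 1 => i) mu) nu⟩) x := by
    intro i
    have h1 : pd i (Kcur (fun _ => L0) Φ B i Z nu) x
        = ∑ Y : Fin (N - (Z:ℕ)), pd i (fun y => ∑ mu : Fin (Y:ℕ) → Fin n,
            (-1:ℝ)^(Y:ℕ) * pds (List.ofFn mu)
              (dLdq (fun _ => L0) Φ
                ⟨⟨1+(Y:ℕ)+(Z:ℕ), by have := Y.isLt; omega⟩, B,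
                  Fin.append (Fin.append (fun _ : Fin 1 => i) mu) nu⟩) y) x := by
      refine pd_sum Finset.univ (fun Y => ?_) i x
      exact Differentiable.fun_sum fun mu _ => ((hdiffbase _ _).const_mul _)
    rw [h1]
    refine Finset.sum_congr rfl fun Y _ => ?_
    rw [pd_sum Finset.univ (fun mu => (hdiffbase _ _).const_mul _) i x]
    refine Finset.sum_congr rfl fun mu _ => ?_
    rw [pd_const_mul (hdiffbase _ _) _ i x]
    rfl
  -- step 2 : LHS = -S
  have hLHS : ∑ i : Fin n, pd i (Kcur (fun _ => L0) Φ B i Z nu) x = -S := by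
    calc ∑ i : Fin n, pd i (Kcur (fun _ => L0) Φ B i Z nu) x
        = ∑ i : Fin n, ∑ Y : Fin (N - (Z:ℕ)), ∑ mu : Fin (Y:ℕ) → Fin n,
            (-1:ℝ)^(Y:ℕ) * pds (i :: List.ofFn mu)
              (dLdq (fun _ => L0) Φ
                ⟨⟨1+(Y:ℕ)+(Z:ℕ), by have := Y.isLt; have := Z.isLt; omega⟩, B,
                  Fin.append (Fin.append (fun _ : Fin 1 => i) mu) nu⟩) x :=
        Finset.sum_congr rfl fun i _ => hKc i
      _ = ∑ Y : Fin (N - (Z:ℕ)), ∑ i : Fin n, ∑ mu : Fin (Y:ℕ) → Fin n,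
            (-1:ℝ)^(Y:ℕ) * pds (i :: List.ofFn mu)
              (dLdq (fun _ => L0) Φ
                ⟨⟨1+(Y:ℕ)+(Z:ℕ), by have := Y.isLt; have := Z.isLt; omega⟩, B,
                  Fin.append (Fin.append (fun _ : Fin 1 => i) mu) nu⟩) x :=
        Finset.sum_comm
      _ = ∑ Y : Fin (N - (Z:ℕ)), ∑ i : Fin n, ∑ mu : Fin (Y:ℕ) → Fin n,
            (-1:ℝ)^(Y:ℕ) * pds (List.ofFn (Fin.cons i mu : Fin ((Y:ℕ)+1) → Fin n))
              (dLdq (fun _ => L0) Φ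
                ⟨⟨(Y:ℕ)+1+(Z:ℕ), by have := Y.isLt; have := Z.isLt; omega⟩, B,
                  Fin.append (Fin.cons i mu) nu⟩) x := by
        refine Finset.sum_congr rfl fun Y _ => Finset.sum_congr rfl fun i _ =>
          Finset.sum_congr rfl fun mu _ => ?_
        rw [ofFn_cons]
        congr 2
        refine funext fun y => ?_
        refine dLdq_congr hL hLsymm hΦ _ _ B _ _ ?_ y
        rw [List.ofFn_fin_append, List.ofFn_fin_append, List.ofFn_fin_append, ofFn_one,
          ofFn_cons]
        exact List.Perm.refl _
      _ = ∑ Y : Fin (N - (Z:ℕ)), ∑ mu' : Fin ((Y:ℕ)+1) → Fin n,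
            (-1:ℝ)^(Y:ℕ) * pds (List.ofFn mu')
              (dLdq (fun _ => L0) Φ
                ⟨⟨(Y:ℕ)+1+(Z:ℕ), by have := Y.isLt; have := Z.isLt; omega⟩, B,
                  Fin.append mu' nu⟩) x := by
        refine Finset.sum_congr rfl fun Y _ => ?_
        exact (sum_cons_equiv (fun mu' : Fin ((Y:ℕ)+1) → Fin n =>
          (-1:ℝ)^(Y:ℕ) * pds (List.ofFn mu')
            (dLdq (fun _ => L0) Φ
              ⟨⟨(Y:ℕ)+1+(Z:ℕ), by have := Y.isLt; have := Z.isLt; omega⟩, B,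
                Fin.append mu' nu⟩) x)).symm
      _ = -S := by
        rw [hS, ← Finset.sum_neg_distrib]
        refine Finset.sum_congr rfl fun Y _ => ?_
        rw [← Finset.sum_neg_distrib]
        refine Finset.sum_congr rfl fun mu' _ => ?_
        rw [pow_succ]
        ring
  -- step 3 : Mcur = dLdq + S
  have hM : Mcur L0 Φ B (Z:ℕ) (by omega) nu x
      = dLdq (fun _ => L0) Φ ⟨⟨(Z:ℕ), by omega⟩, B, nu⟩ x + S := by
    unfold Mcur
    rw [Fin.sum_univ_succ]
    congr 1
    -- the Y = 0 term
    have hu : Unique (Fin ((0 : Fin (N - (Z:ℕ) + 1)) : ℕ) → Fin n) := by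
      have h0 : ((0 : Fin (N - (Z:ℕ) + 1)) : ℕ) = 0 := rfl
      rw [h0]; infer_instance
    rw [@Fintype.sum_unique _ _ _ _ hu]
    simp only [Fin.val_zero, pow_zero, one_mul]
    show pds [] (dLdq (fun _ => L0) Φ _) x = _
    unfold pds
    refine dLdq_congr hL hLsymm hΦ _ _ B _ nu ?_ x
    rw [List.ofFn_fin_append]
    have : List.ofFn (@default (Fin 0 → Fin n) _) = [] := by simp
    simp
  rw [hLHS, hM]
  ring

end KDiv

set_option maxHeartbeats 4000000 in
/-- equations (30)–(31) of the paper: if the Lagrangian does not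
depend explicitly on the coordinates and `Φ` solves the Euler–Lagrange equations,
then the canonical energy–momentum `τ^λ_σ` is divergence free. -/
theorem canonical_energy_momentum_conserved {n f N : ℕ} (hn : 2 ≤ n) (hf : 1 ≤ f)
    (hN : 1 ≤ N)
    (L0 : Jet n f N → ℝ) (hL : ContDiff ℝ (⊤ : ℕ∞) L0)
    (hLsymm : ∀ (q : Jet n f N) (X : Fin (N + 1)) (σ : Equiv.Perm (Fin (X : ℕ))),
      L0 (permJet X σ q) = L0 q)
    (Φ : Fin f → (Fin n → ℝ) → ℝ) (hΦ : ∀ B, ContDiff ℝ (⊤ : ℕ∞) (Φ B))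
    (hEL : ∀ (B : Fin f) (x : Fin n → ℝ), EulerLagrange (fun _ => L0) Φ B x = 0) :
    ∀ (x : Fin n → ℝ) (σ : Fin n),
      ∑ lam : Fin n,
        pd lam
          (fun x' =>
            (if lam = σ then L0 (jet Φ x') else 0)
              - ∑ B : Fin f, ∑ Z : Fin N, ∑ nu : Fin (Z : ℕ) → Fin n,
                  pds (σ :: List.ofFn nu) (Φ B) x'
                    * Kcur (fun _ => L0) Φ B lam Z nu x') x
        = 0 := by
  intro x σ
  -- basic differentiability facts
  have hdifftop : ((⊤:ℕ∞) : WithTop ℕ∞) ≠ 0 := by simp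
  have hLjet : Differentiable ℝ (fun x' => L0 (jet (N := N) Φ x')) :=
    ((hL.comp (contDiff_jet hΦ)).differentiable hdifftop)
  have hPdiff : ∀ (B : Fin f) (l : List (Fin n)), Differentiable ℝ (pds l (Φ B)) :=
    fun B l => (contDiff_pds (hΦ B) l).differentiable hdifftop
  have hdiffbase : ∀ (idx : JIdx n f N) (l : List (Fin n)),
      Differentiable ℝ (pds l (dLdq (fun _ => L0) Φ idx)) := fun idx l =>
    (contDiff_pds (contDiff_dLdq hL hΦ idx) l).differentiable hdifftop
  have hKdiff : ∀ (B : Fin f) (lam : Fin n) (Z : Fin N) (nu : Fin (Z:ℕ) → Fin n),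
      Differentiable ℝ (Kcur (fun _ => L0) Φ B lam Z nu) := by
    intro B lam Z nu
    unfold Kcur
    exact Differentiable.fun_sum fun Y _ =>
      Differentiable.fun_sum fun mu _ => ((hdiffbase _ _).const_mul _)
  have hITEdiff : ∀ lam : Fin n,
      Differentiable ℝ (fun x' => if lam = σ then L0 (jet (N := N) Φ x') else 0) := by
    intro lam
    by_cases h : lam = σ
    · simp only [h, if_true]; exact hLjet
    · simp only [h, if_false]; exact differentiable_const 0
  have hSdiff : ∀ lam : Fin n, Differentiable ℝ
      (fun x' => ∑ B : Fin f, ∑ Z : Fin N, ∑ nu : Fin (Z : ℕ) → Fin n,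
        pds (σ :: List.ofFn nu) (Φ B) x' * Kcur (fun _ => L0) Φ B lam Z nu x') :=
    fun lam => Differentiable.fun_sum fun B _ => Differentiable.fun_sum fun Z _ =>
      Differentiable.fun_sum fun nu _ => (hPdiff B _).mul (hKdiff B lam Z nu)
  -- split the subtraction
  have hsplit : ∀ lam : Fin n,
      pd lam (fun x' =>
          (if lam = σ then L0 (jet Φ x') else 0)
            - ∑ B : Fin f, ∑ Z : Fin N, ∑ nu : Fin (Z : ℕ) → Fin n,
                pds (σ :: List.ofFn nu) (Φ B) x' * Kcur (fun _ => L0) Φ B lam Z nu x') x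
        = pd lam (fun x' => if lam = σ then L0 (jet Φ x') else 0) x
          - pd lam (fun x' => ∑ B : Fin f, ∑ Z : Fin N, ∑ nu : Fin (Z : ℕ) → Fin n,
              pds (σ :: List.ofFn nu) (Φ B) x' * Kcur (fun _ => L0) Φ B lam Z nu x') x :=
    fun lam => pd_sub (hITEdiff lam) (hSdiff lam) lam x
  rw [Finset.sum_congr rfl (fun lam _ => hsplit lam), Finset.sum_sub_distrib]
  -- the ite part sums to the σ-derivative of L along the jet
  have hite : ∑ lam : Fin n, pd lam (fun x' => if lam = σ then L0 (jet Φ x') else 0) x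
      = pd σ (fun x' => L0 (jet (N := N) Φ x')) x := by
    have h1 : ∀ lam : Fin n, pd lam (fun x' => if lam = σ then L0 (jet Φ x') else 0) x
        = if lam = σ then pd σ (fun x' => L0 (jet (N := N) Φ x')) x else 0 := by
      intro lam
      by_cases h : lam = σ
      · subst h; simp only [if_true]
      · simp only [h, if_false]; exact pd_zero lam x
    rw [Finset.sum_congr rfl (fun lam _ => h1 lam), Finset.sum_ite_eq' Finset.univ σ]
    simp
  rw [hite]
  -- chain rule for the first part
  have hchain : pd σ (fun x' => L0 (jet (N := N) Φ x')) x
      = ∑ B : Fin f, ∑ X : Fin (N+1), ∑ κ : Fin (X:ℕ) → Fin n,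
          pds (σ :: List.ofFn κ) (Φ B) x * dLdq (fun _ => L0) Φ ⟨X, B, κ⟩ x := by
    rw [pd_L0_jet hL hΦ σ x]
    rw [← Finset.univ_sigma_univ, Finset.sum_sigma]
    rw [Finset.sum_congr rfl (fun X _ => Fintype.sum_prod_type _)]
    exact Finset.sum_comm
  -- the K-part, per field B: telescoping quantity g
  have hgdef : True := trivial
  set g : Fin f → ℕ → ℝ := fun B Z =>
    if h : Z ≤ N then
      ∑ nu : Fin Z → Fin n,
        pds (σ :: List.ofFn nu) (Φ B) x * Mcur L0 Φ B Z h nu x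
    else 0 with hg
  have hg0 : ∀ B, g B 0 = 0 := by
    intro B
    rw [hg]
    simp only
    rw [dif_pos (Nat.zero_le N)]
    have hu : Unique (Fin 0 → Fin n) := by infer_instance
    rw [@Fintype.sum_unique _ _ _ _ hu]
    rw [Mcur_zero hL hLsymm hΦ B _ x, hEL B x, mul_zero]
  have hgN : ∀ B, g B N = ∑ nu : Fin N → Fin n,
      pds (σ :: List.ofFn nu) (Φ B) x
        * dLdq (fun _ => L0) Φ ⟨⟨N, by omega⟩, B, nu⟩ x := by
    intro B
    rw [hg]
    simp only
    rw [dif_pos le_rfl]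
    exact Finset.sum_congr rfl fun nu _ => by
      rw [Mcur_top hL hLsymm hΦ B nu x]
  have hmain : ∀ (B : Fin f) (lam : Fin n),
      pd lam (fun x' => ∑ Z : Fin N, ∑ nu : Fin (Z : ℕ) → Fin n,
          pds (σ :: List.ofFn nu) (Φ B) x' * Kcur (fun _ => L0) Φ B lam Z nu x') x
        = ∑ Z : Fin N, ∑ nu : Fin (Z : ℕ) → Fin n,
            (pds (lam :: σ :: List.ofFn nu) (Φ B) x * Kcur (fun _ => L0) Φ B lam Z nu x
              + pds (σ :: List.ofFn nu) (Φ B) x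
                  * pd lam (Kcur (fun _ => L0) Φ B lam Z nu) x) := by
    intro B lam
    rw [pd_sum Finset.univ (fun Z => Differentiable.fun_sum fun nu _ =>
      (hPdiff B _).fun_mul (hKdiff B lam Z nu)) lam x]
    refine Finset.sum_congr rfl fun Z _ => ?_
    rw [pd_sum Finset.univ (fun nu => (hPdiff B _).fun_mul (hKdiff B lam Z nu)) lam x]
    refine Finset.sum_congr rfl fun nu _ => ?_
    exact pd_mul (hPdiff B _) (hKdiff B lam Z nu) lam x
  have hsplit2 : ∀ (B : Fin f) (Z : Fin N) (nu : Fin (Z:ℕ) → Fin n),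
      ∑ lam : Fin n,
        (pds (lam :: σ :: List.ofFn nu) (Φ B) x * Kcur (fun _ => L0) Φ B lam Z nu x
          + pds (σ :: List.ofFn nu) (Φ B) x
              * pd lam (Kcur (fun _ => L0) Φ B lam Z nu) x)
      = (∑ lam : Fin n,
          pds (σ :: List.ofFn (Fin.cons lam nu : Fin ((Z:ℕ)+1) → Fin n)) (Φ B) x
            * Mcur L0 Φ B ((Z:ℕ)+1) (by have := Z.isLt; omega) (Fin.cons lam nu) x)
        + pds (σ :: List.ofFn nu) (Φ B) x
            * (dLdq (fun _ => L0) Φ ⟨⟨(Z:ℕ), by have := Z.isLt; omega⟩, B, nu⟩ x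
                - Mcur L0 Φ B (Z:ℕ) (by have := Z.isLt; omega) nu x) := by
    intro B Z nu
    rw [Finset.sum_add_distrib]
    congr 1
    · refine Finset.sum_congr rfl fun lam _ => ?_
      rw [Mcur_step hL hLsymm hΦ B Z lam nu x]
      congr 1
      have hswap : pds (lam :: σ :: List.ofFn nu) (Φ B) x
          = pds (σ :: lam :: List.ofFn nu) (Φ B) x := by
        show pd lam (pd σ (pds (List.ofFn nu) (Φ B))) x
          = pd σ (pd lam (pds (List.ofFn nu) (Φ B))) x
        exact pd_comm (contDiff_pds (hΦ B) _) lam σ x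
      rw [hswap, ofFn_cons]
    · rw [← Finset.mul_sum, Kcur_div hL hLsymm hΦ B Z nu x]
  have hinner : ∀ (B : Fin f) (Z : Fin N),
      ∑ nu : Fin (Z:ℕ) → Fin n,
        ((∑ lam : Fin n,
            pds (σ :: List.ofFn (Fin.cons lam nu : Fin ((Z:ℕ)+1) → Fin n)) (Φ B) x
              * Mcur L0 Φ B ((Z:ℕ)+1) (by have := Z.isLt; omega) (Fin.cons lam nu) x)
          + pds (σ :: List.ofFn nu) (Φ B) x
              * (dLdq (fun _ => L0) Φ ⟨⟨(Z:ℕ), by have := Z.isLt; omega⟩, B, nu⟩ x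
                  - Mcur L0 Φ B (Z:ℕ) (by have := Z.isLt; omega) nu x))
      = (g B ((Z:ℕ) + 1) - g B (Z:ℕ))
        + ∑ nu : Fin (Z:ℕ) → Fin n,
            pds (σ :: List.ofFn nu) (Φ B) x
              * dLdq (fun _ => L0) Φ ⟨⟨(Z:ℕ), by have := Z.isLt; omega⟩, B, nu⟩ x := by
    intro B Z
    rw [Finset.sum_add_distrib]
    have hA : ∑ nu : Fin (Z:ℕ) → Fin n, ∑ lam : Fin n,
        pds (σ :: List.ofFn (Fin.cons lam nu : Fin ((Z:ℕ)+1) → Fin n)) (Φ B) x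
          * Mcur L0 Φ B ((Z:ℕ)+1) (by have := Z.isLt; omega) (Fin.cons lam nu) x
        = g B ((Z:ℕ) + 1) := by
      rw [Finset.sum_comm]
      rw [← sum_cons_equiv (fun nu' : Fin ((Z:ℕ)+1) → Fin n =>
        pds (σ :: List.ofFn nu') (Φ B) x
          * Mcur L0 Φ B ((Z:ℕ)+1) (by have := Z.isLt; omega) nu' x)]
      rw [hg]
      simp only
      rw [dif_pos (by have := Z.isLt; omega : (Z:ℕ) + 1 ≤ N)]
    have hB : ∑ nu : Fin (Z:ℕ) → Fin n,
        pds (σ :: List.ofFn nu) (Φ B) x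
          * (dLdq (fun _ => L0) Φ ⟨⟨(Z:ℕ), by have := Z.isLt; omega⟩, B, nu⟩ x
              - Mcur L0 Φ B (Z:ℕ) (by have := Z.isLt; omega) nu x)
        = (∑ nu : Fin (Z:ℕ) → Fin n,
            pds (σ :: List.ofFn nu) (Φ B) x
              * dLdq (fun _ => L0) Φ ⟨⟨(Z:ℕ), by have := Z.isLt; omega⟩, B, nu⟩ x)
          - g B (Z:ℕ) := by
      rw [Finset.sum_congr rfl (fun nu _ => mul_sub _ _ _), Finset.sum_sub_distrib]
      congr 1
      rw [hg]
      simp only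
      rw [dif_pos (by have := Z.isLt; omega : (Z:ℕ) ≤ N)]
    rw [hA, hB]
    ring
  have htel : ∀ B, ∑ Z : Fin N, (g B ((Z:ℕ) + 1) - g B (Z:ℕ)) = g B N := by
    intro B
    rw [Fin.sum_univ_eq_sum_range (fun i => g B (i+1) - g B i) N]
    rw [Finset.sum_range_sub (g B) N]
    rw [hg0 B, sub_zero]
  have hchainB : ∀ B : Fin f, ∑ X : Fin (N+1), ∑ κ : Fin (X:ℕ) → Fin n,
      pds (σ :: List.ofFn κ) (Φ B) x * dLdq (fun _ => L0) Φ ⟨X, B, κ⟩ x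
      = (∑ Z : Fin N, ∑ nu : Fin (Z:ℕ) → Fin n,
          pds (σ :: List.ofFn nu) (Φ B) x
            * dLdq (fun _ => L0) Φ ⟨⟨(Z:ℕ), by have := Z.isLt; omega⟩, B, nu⟩ x)
        + g B N := by
    intro B
    rw [Fin.sum_univ_castSucc (f := fun X : Fin (N+1) =>
      ∑ κ : Fin (X:ℕ) → Fin n,
        pds (σ :: List.ofFn κ) (Φ B) x * dLdq (fun _ => L0) Φ ⟨X, B, κ⟩ x)]
    rw [hgN]
    rfl
  have hperB : ∀ B : Fin f,
      ∑ lam : Fin n, pd lam (fun x' => ∑ Z : Fin N, ∑ nu : Fin (Z : ℕ) → Fin n,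
          pds (σ :: List.ofFn nu) (Φ B) x' * Kcur (fun _ => L0) Φ B lam Z nu x') x
      = ∑ X : Fin (N+1), ∑ κ : Fin (X:ℕ) → Fin n,
          pds (σ :: List.ofFn κ) (Φ B) x * dLdq (fun _ => L0) Φ ⟨X, B, κ⟩ x := by
    intro B
    rw [Finset.sum_congr rfl (fun lam _ => hmain B lam)]
    rw [Finset.sum_comm]
    rw [Finset.sum_congr rfl (fun Z _ => Finset.sum_comm)]
    rw [Finset.sum_congr rfl (fun Z _ =>
      Finset.sum_congr rfl (fun nu _ => hsplit2 B Z nu))]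
    rw [Finset.sum_congr rfl (fun Z _ => hinner B Z)]
    rw [Finset.sum_add_distrib, htel B, hchainB B]
    exact add_comm _ _
  have hKtotal : ∑ lam : Fin n,
      pd lam (fun x' => ∑ B : Fin f, ∑ Z : Fin N, ∑ nu : Fin (Z : ℕ) → Fin n,
        pds (σ :: List.ofFn nu) (Φ B) x' * Kcur (fun _ => L0) Φ B lam Z nu x') x
      = ∑ B : Fin f, ∑ X : Fin (N+1), ∑ κ : Fin (X:ℕ) → Fin n,
          pds (σ :: List.ofFn κ) (Φ B) x * dLdq (fun _ => L0) Φ ⟨X, B, κ⟩ x := by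
    rw [Finset.sum_congr rfl (fun lam _ => pd_sum Finset.univ
      (fun B => Differentiable.fun_sum fun Z _ => Differentiable.fun_sum fun nu _ =>
        (hPdiff B _).fun_mul (hKdiff B lam Z nu)) lam x)]
    rw [Finset.sum_comm]
    exact Finset.sum_congr rfl (fun B _ => hperB B)
  rw [hKtotal, hchain, sub_self]
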